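/- Let Ŝ be the τ-nice sampling of {1,...,n} with τ ≥ 1, and let f : R^N → R be a partially separable convex function of degree ω satisfying the block Lipschitz condition with constants L_i. Then for all x, h ∈ R^N: E[f(x + h_{[Ŝ]})] ≤ f(x) + (τ/n)(⟨∇f(x), h⟩ + (β/2)‖h‖_L²), where β = 1 + (ω−1)(τ−1)/max{1, n−1}. -/

import Mathlib

open Finset

private lemma icc_to_range {M : Type*} [AddCommMonoid M] (f : ℕ → M) (τ : ℕ) :
    ∑ k ∈ Icc 1 τ, f k = ∑ j ∈ range τ, f (j+1) := by
  rw [← Finset.Ico_add_one_right_eq_Icc, Finset.sum_Ico_eq_sum_range]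
  simp [Nat.add_comm]

private lemma choose_id1 (n τ : ℕ) (h1 : 1 ≤ τ) (h2 : τ ≤ n) :
    n * (n-1).choose (τ-1) = τ * n.choose τ := by
  have hh := Nat.add_one_mul_choose_eq (n-1) (τ-1)
  have hn : n-1+1 = n := by omega
  have ht : τ-1+1 = τ := by omega
  rw [hn, ht] at hh
  rw [hh]; ring

private lemma vand1 (n τ w : ℕ) (hτ1 : 1 ≤ τ) (hw1 : 1 ≤ w) (hwn : w ≤ n) :
    ∑ k ∈ Icc 1 τ, (w-1).choose (k-1) * (n-w).choose (τ-k) = (n-1).choose (τ-1) := by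
  rw [icc_to_range]
  have hc : ∀ j ∈ range τ, (w-1).choose (j+1-1) * (n-w).choose (τ-(j+1))
      = (w-1).choose j * (n-w).choose (τ-1-j) := by
    intro j hj
    congr 2 <;> omega
  rw [Finset.sum_congr rfl hc]
  have hv := Nat.add_choose_eq (w-1) (n-w) (τ-1)
  rw [Nat.sum_antidiagonal_eq_sum_range_succ_mk] at hv
  have hτ : (τ-1).succ = τ := by omega
  have hnw : w - 1 + (n - w) = n - 1 := by omega
  rw [hτ, hnw] at hv
  rw [← hv]
  
private lemma vand2 (n τ w : ℕ) (hτ2 : 2 ≤ τ) (hw1 : 1 ≤ w) (hwn : w ≤ n) :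
    ∑ k ∈ Icc 1 τ, k * ((w-1).choose (k-1) * (n-w).choose (τ-k))
      = (n-1).choose (τ-1) + (w-1) * (n-2).choose (τ-2) := by
  have hsplit : ∀ k ∈ Icc 1 τ, k * ((w-1).choose (k-1) * (n-w).choose (τ-k))
      = (k-1) * ((w-1).choose (k-1) * (n-w).choose (τ-k))
        + (w-1).choose (k-1) * (n-w).choose (τ-k) := by
    intro k hk
    have h1 : 1 ≤ k := (mem_Icc.mp hk).1
    rcases Nat.exists_eq_add_of_le h1 with ⟨m, hm⟩
    subst hm
    simp [Nat.add_sub_cancel_left, Nat.add_mul, Nat.one_mul, Nat.add_comm, Nat.succ_mul]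
  rw [Finset.sum_congr rfl hsplit, Finset.sum_add_distrib, vand1 n τ w (by omega) hw1 hwn]
  have hmain : ∑ k ∈ Icc 1 τ, (k-1) * ((w-1).choose (k-1) * (n-w).choose (τ-k))
      = (w-1) * (n-2).choose (τ-2) := by
    rw [icc_to_range]
    -- terms: j * (C(w-1,j) * C(n-w, τ-1-j)) over j ∈ range τ
    have hc : ∀ j ∈ range τ, (j+1-1) * ((w-1).choose (j+1-1) * (n-w).choose (τ-(j+1)))
        = j * ((w-1).choose j * (n-w).choose (τ-1-j)) := by
      intro j hj; congr 3 <;> omega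
    rw [Finset.sum_congr rfl hc]
    rcases Nat.lt_or_ge w 2 with hw2 | hw2
    · -- w = 1
      have hw : w = 1 := by omega
      subst hw
      have : ∀ j ∈ range τ, j * ((Nat.choose 0 j) * (n-1).choose (τ-1-j)) = 0 := by
        intro j hj
        rcases Nat.eq_zero_or_pos j with h | h
        · subst h; simp
        · rw [Nat.choose_eq_zero_of_lt (by omega)]; ring
      rw [Finset.sum_congr rfl this]; simp
    · -- w ≥ 2
      have hττ : τ = (τ-1) + 1 := by omega
      rw [hττ, Finset.sum_range_succ', ← hττ]
      simp only [Nat.zero_mul, Nat.add_zero]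
      have hc2 : ∀ j ∈ range (τ-1), (j+1) * ((w-1).choose (j+1) * (n-w).choose (τ-1-(j+1)))
          = (w-1) * ((w-2).choose j * (n-w).choose (τ-2-j)) := by
        intro j hj
        have hid := Nat.add_one_mul_choose_eq (w-2) j
        have hws : w-2+1 = w-1 := by omega
        rw [hws] at hid
        -- hid : (w-1) * (w-2).choose j = (w-1).choose (j+1) * (j+1)
        have harg : τ - 1 - (j+1) = τ - 2 - j := by omega
        rw [harg]
        calc (j+1) * ((w-1).choose (j+1) * (n-w).choose (τ-2-j))
            = ((w-1).choose (j+1) * (j+1)) * (n-w).choose (τ-2-j) := by ring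
          _ = ((w-1) * (w-2).choose j) * (n-w).choose (τ-2-j) := by rw [← hid]
          _ = (w-1) * ((w-2).choose j * (n-w).choose (τ-2-j)) := by ring
      rw [Finset.sum_congr rfl hc2, ← Finset.mul_sum]
      congr 1
      have hv := Nat.add_choose_eq (w-2) (n-w) (τ-2)
      rw [Nat.sum_antidiagonal_eq_sum_range_succ_mk] at hv
      have hτs : (τ-2).succ = τ-1 := by omega
      have hnw : w - 2 + (n - w) = n - 2 := by omega
      rw [hτs, hnw] at hv
      rw [← hv]
  rw [hmain]; ring

private lemma countD {n : ℕ} (τ k : ℕ) (J : Finset (Fin n)) (i : Fin n) (hi : i ∈ J)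
    (hk1 : 1 ≤ k) (hkτ : k ≤ τ) :
    ((univ : Finset (Finset (Fin n))).filter
        (fun S => S.card = τ ∧ i ∈ S ∧ (S ∩ J).card = k)).card
      = (J.card - 1).choose (k-1) * (n - J.card).choose (τ-k) := by
  have htarget : (((J.erase i).powersetCard (k-1)) ×ˢ ((Jᶜ).powersetCard (τ-k))).card
      = (J.card - 1).choose (k-1) * (n - J.card).choose (τ-k) := by
    rw [Finset.card_product, Finset.card_powersetCard, Finset.card_powersetCard,
      Finset.card_erase_of_mem hi, Finset.card_compl]
    simp
  rw [← htarget]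
  apply Finset.card_nbij' (fun S => ((S ∩ J).erase i, S \ J))
      (fun A => insert i (A.1 ∪ A.2))
  · -- forward map lands in target
    intro S hS
    simp only [Finset.mem_coe, mem_filter, mem_univ, true_and] at hS
    obtain ⟨hcard, hiS, hk⟩ := hS
    simp only [Finset.mem_coe, Finset.mem_product, Finset.mem_powersetCard]
    refine ⟨⟨?_, ?_⟩, ?_, ?_⟩
    · exact Finset.erase_subset_erase i (Finset.inter_subset_right)
    · rw [Finset.card_erase_of_mem (Finset.mem_inter.mpr ⟨hiS, hi⟩), hk]
    · intro j hj
      simp only [Finset.mem_sdiff] at hj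
      simp [hj.2]
    · have := Finset.card_inter_add_card_sdiff S J
      omega
  · -- backward map lands in source
    rintro ⟨A, B⟩ hAB
    simp only [Finset.mem_coe, Finset.mem_product, Finset.mem_powersetCard] at hAB
    obtain ⟨⟨hA, hAc⟩, hB, hBc⟩ := hAB
    have hAJ : A ⊆ J := hA.trans (Finset.erase_subset i J)
    have hiA : i ∉ A := fun hh => (Finset.mem_erase.mp (hA hh)).1 rfl
    have hBJ : ∀ j ∈ B, j ∉ J := fun j hj => by
      have := hB hj; simpa using this
    have hiB : i ∉ B := fun hh => hBJ i hh hi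
    have hdisj : Disjoint A B := by
      rw [Finset.disjoint_left]
      intro a ha hb
      exact hBJ a hb (hAJ ha)
    have hIJ : insert i (A ∪ B) ∩ J = insert i A := by
      ext j
      simp only [Finset.mem_inter, Finset.mem_insert, Finset.mem_union]
      constructor
      · rintro ⟨(rfl | hj | hj), hjJ⟩
        · exact Or.inl rfl
        · exact Or.inr hj
        · exact absurd hjJ (hBJ j hj)
      · rintro (rfl | hj)
        · exact ⟨Or.inl rfl, hi⟩
        · exact ⟨Or.inr (Or.inl hj), hAJ hj⟩
    simp only [Finset.mem_coe, mem_filter, mem_univ, true_and]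
    refine ⟨?_, Finset.mem_insert_self i _, ?_⟩
    · rw [Finset.card_insert_of_notMem (by simp [hiA, hiB]),
        Finset.card_union_of_disjoint hdisj, hAc, hBc]
      omega
    · rw [hIJ, Finset.card_insert_of_notMem hiA, hAc]
      omega
  · -- left inverse
    intro S hS
    simp only [Finset.mem_coe, mem_filter, mem_univ, true_and] at hS
    obtain ⟨hcard, hiS, hk⟩ := hS
    ext j
    simp only [Finset.mem_insert, Finset.mem_union, Finset.mem_erase, Finset.mem_inter,
      Finset.mem_sdiff]
    constructor
    · rintro (rfl | ⟨_, hj, _⟩ | ⟨hj, _⟩) <;> assumption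
    · intro hj
      by_cases hji : j = i
      · exact Or.inl hji
      · by_cases hjJ : j ∈ J
        · exact Or.inr (Or.inl ⟨hji, hj, hjJ⟩)
        · exact Or.inr (Or.inr ⟨hj, hjJ⟩)
  · -- right inverse
    rintro ⟨A, B⟩ hAB
    simp only [Finset.mem_coe, Finset.mem_product, Finset.mem_powersetCard] at hAB
    obtain ⟨⟨hA, hAc⟩, hB, hBc⟩ := hAB
    have hAJ : A ⊆ J := hA.trans (Finset.erase_subset i J)
    have hiA : i ∉ A := fun hh => (Finset.mem_erase.mp (hA hh)).1 rfl
    have hBJ : ∀ j ∈ B, j ∉ J := fun j hj => by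
      have := hB hj; simpa using this
    have h1 : insert i (A ∪ B) ∩ J = insert i A := by
      ext j
      simp only [Finset.mem_inter, Finset.mem_insert, Finset.mem_union]
      constructor
      · rintro ⟨(rfl | hj | hj), hjJ⟩
        · exact Or.inl rfl
        · exact Or.inr hj
        · exact absurd hjJ (hBJ j hj)
      · rintro (rfl | hj)
        · exact ⟨Or.inl rfl, hi⟩
        · exact ⟨Or.inr (Or.inl hj), hAJ hj⟩
    have h2 : insert i (A ∪ B) \ J = B := by
      ext j
      simp only [Finset.mem_sdiff, Finset.mem_insert, Finset.mem_union]
      constructor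
      · rintro ⟨(rfl | hj | hj), hjJ⟩
        · exact absurd hi hjJ
        · exact absurd (hAJ hj) hjJ
        · exact hj
      · intro hj
        exact ⟨Or.inr (Or.inr hj), hBJ j hj⟩
    rw [Prod.mk.injEq]
    constructor
    · rw [h1, Finset.erase_insert hiA]
    · exact h2
private lemma stepA {n : ℕ} {E : Fin n → Type*} [∀ i, NormedAddCommGroup (E i)]
    [∀ i, NormedSpace ℝ (E i)]
    (g : (∀ i, E i) → ℝ) (hg : ConvexOn ℝ Set.univ g) (J : Finset (Fin n))
    (hdep : ∀ x y : ∀ i, E i, (∀ i ∈ J, x i = y i) → g x = g y)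
    (x h : ∀ i, E i) (S : Finset (Fin n)) :
    g (x + fun i => if i ∈ S then h i else 0) - g x ≤
      ∑ i ∈ S ∩ J, (((S ∩ J).card : ℝ))⁻¹ *
        (g (x + ((S ∩ J).card : ℝ) • Pi.single i (h i)) - g x) := by
  set T := S ∩ J with hT
  set k := T.card with hk
  have hgeq : g (x + fun i => if i ∈ S then h i else 0)
      = g (x + ∑ i ∈ T, Pi.single i (h i)) := by
    apply hdep
    intro j hj
    simp only [Pi.add_apply, Finset.sum_apply, Finset.sum_pi_single]
    have : j ∈ T ↔ j ∈ S := by simp [hT, hj]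
    simp [this]
  rcases Nat.eq_zero_or_pos k with hk0 | hkpos
  · have hTe : T = ∅ := Finset.card_eq_zero.mp hk0
    rw [hgeq, hTe]
    simp
  · have hkR : (0:ℝ) < (k:ℝ) := by exact_mod_cast hkpos
    have hpts : x + ∑ i ∈ T, Pi.single i (h i)
        = ∑ i ∈ T, ((k:ℝ))⁻¹ • (x + (k:ℝ) • Pi.single i (h i)) := by
      rw [Finset.sum_congr rfl (fun i _ => smul_add ((k:ℝ))⁻¹ x ((k:ℝ) • Pi.single i (h i))),
        Finset.sum_add_distrib, Finset.sum_const, ← hk]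
      congr 1
      · rw [← Nat.cast_smul_eq_nsmul ℝ, smul_smul, mul_inv_cancel₀ (ne_of_gt hkR), one_smul]
      · apply Finset.sum_congr rfl
        intro i _
        rw [smul_smul, inv_mul_cancel₀ (ne_of_gt hkR), one_smul]
    have hconv := hg.map_sum_le (t := T) (w := fun _ => ((k:ℝ))⁻¹)
      (p := fun i => x + (k:ℝ) • Pi.single i (h i))
      (fun i _ => by positivity)
      (by rw [Finset.sum_const, ← hk, ← Nat.cast_smul_eq_nsmul ℝ, smul_eq_mul]
          field_simp)
      (fun i _ => Set.mem_univ _)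
    rw [hgeq, hpts]
    have hsum : ∑ i ∈ T, ((k:ℝ))⁻¹ * (g (x + (k:ℝ) • Pi.single i (h i)) - g x)
        = (∑ i ∈ T, ((k:ℝ))⁻¹ • g (x + (k:ℝ) • Pi.single i (h i))) - g x := by
      rw [Finset.sum_congr rfl (fun i _ => mul_sub ((k:ℝ))⁻¹ _ _), Finset.sum_sub_distrib]
      have hgx : ∑ _i ∈ T, ((k:ℝ))⁻¹ * g x = g x := by
        rw [Finset.sum_const, ← hk, nsmul_eq_mul]
        field_simp
      rw [hgx]
      simp [smul_eq_mul]
    rw [hsum]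
    linarith [hconv]

private lemma perA {n : ℕ} {E : Fin n → Type*} [∀ i, NormedAddCommGroup (E i)]
    [∀ i, NormedSpace ℝ (E i)]
    (g : (∀ i, E i) → ℝ) (hg : ConvexOn ℝ Set.univ g) (J : Finset (Fin n))
    (hdep : ∀ x y : ∀ i, E i, (∀ i ∈ J, x i = y i) → g x = g y)
    (x h : ∀ i, E i) (τ : ℕ) (hτ1 : 1 ≤ τ) :
    ∑ S ∈ (univ : Finset (Finset (Fin n))).filter (fun S => S.card = τ),
        (g (x + fun i => if i ∈ S then h i else 0) - g x)
      ≤ ∑ k ∈ Icc 1 τ, ∑ i : Fin n,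
          (((J.card - 1).choose (k-1) * (n - J.card).choose (τ-k) : ℕ) : ℝ) *
            ((k:ℝ)⁻¹ * (g (x + (k:ℝ) • Pi.single i (h i)) - g x)) := by
  classical
  set u : Fin n → ℕ → ℝ :=
    fun i k => (k:ℝ)⁻¹ * (g (x + (k:ℝ) • Pi.single i (h i)) - g x) with hu
  set c : ℕ → ℝ :=
    fun k => (((J.card - 1).choose (k-1) * (n - J.card).choose (τ-k) : ℕ) : ℝ) with hc
  set P : Finset (Finset (Fin n)) := univ.filter (fun S => S.card = τ) with hP
  have step1 : ∑ S ∈ P, (g (x + fun i => if i ∈ S then h i else 0) - g x)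
      ≤ ∑ S ∈ P, ∑ i ∈ S ∩ J, u i ((S ∩ J).card) :=
    Finset.sum_le_sum (fun S _ => stepA g hg J hdep x h S)
  have step2 : ∀ S : Finset (Fin n), ∑ i ∈ S ∩ J, u i ((S ∩ J).card)
      = ∑ i ∈ J, if i ∈ S then u i ((S ∩ J).card) else 0 := by
    intro S
    have hSJ : S ∩ J = J.filter (· ∈ S) := by
      ext j; simp [Finset.mem_inter, and_comm]
    rw [Finset.sum_congr hSJ (fun _ _ => rfl), Finset.sum_filter]
  have step3 : ∑ S ∈ P, ∑ i ∈ S ∩ J, u i ((S ∩ J).card)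
      = ∑ i ∈ J, ∑ S ∈ P, (if i ∈ S then u i ((S ∩ J).card) else 0) := by
    rw [Finset.sum_congr rfl (fun S _ => step2 S)]
    exact Finset.sum_comm
  have step4 : ∀ i ∈ J, ∑ S ∈ P, (if i ∈ S then u i ((S ∩ J).card) else 0)
      = ∑ k ∈ Icc 1 τ, c k * u i k := by
    intro i hiJ
    rw [← Finset.sum_filter]
    have hmaps : ∀ S ∈ P.filter (fun S => i ∈ S), (S ∩ J).card ∈ Icc 1 τ := by
      intro S hS
      simp only [hP, Finset.mem_filter, Finset.mem_univ, true_and] at hS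
      rw [Finset.mem_Icc]
      constructor
      · rw [Nat.one_le_iff_ne_zero, ← Nat.pos_iff_ne_zero]
        exact Finset.card_pos.mpr ⟨i, Finset.mem_inter.mpr ⟨hS.2, hiJ⟩⟩
      · calc (S ∩ J).card ≤ S.card := Finset.card_le_card Finset.inter_subset_left
          _ = τ := hS.1
    rw [← Finset.sum_fiberwise_of_maps_to hmaps (fun S => u i ((S ∩ J).card))]
    apply Finset.sum_congr rfl
    intro k hk
    have hconst : ∀ S ∈ (P.filter (fun S => i ∈ S)).filter (fun S => (S ∩ J).card = k),
        u i ((S ∩ J).card) = u i k := by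
      intro S hS
      rw [(Finset.mem_filter.mp hS).2]
    rw [Finset.sum_congr rfl hconst, Finset.sum_const, nsmul_eq_mul]
    congr 1
    simp only [hc, hP]
    rw [Finset.filter_filter, Finset.filter_filter]
    rw [Finset.mem_Icc] at hk
    exact_mod_cast countD τ k J i hiJ hk.1 hk.2
  have step5 : ∀ i, i ∉ J → ∀ k ∈ Icc 1 τ, u i k = 0 := by
    intro i hiJ k _
    have : g (x + (k:ℝ) • Pi.single i (h i)) = g x := by
      apply hdep
      intro j hj
      have hji : j ≠ i := fun hh => hiJ (hh ▸ hj)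
      simp [Pi.single_eq_of_ne hji]
    rw [hu]
    simp [this]
  calc ∑ S ∈ P, (g (x + fun i => if i ∈ S then h i else 0) - g x)
      ≤ ∑ S ∈ P, ∑ i ∈ S ∩ J, u i ((S ∩ J).card) := step1
    _ = ∑ i ∈ J, ∑ S ∈ P, (if i ∈ S then u i ((S ∩ J).card) else 0) := step3
    _ = ∑ i ∈ J, ∑ k ∈ Icc 1 τ, c k * u i k := Finset.sum_congr rfl step4
    _ = ∑ i : Fin n, ∑ k ∈ Icc 1 τ, c k * u i k := by
        apply Finset.sum_subset (Finset.subset_univ J)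
        intro i _ hiJ
        apply Finset.sum_eq_zero
        intro k hk
        rw [step5 i hiJ k hk, mul_zero]
    _ = ∑ k ∈ Icc 1 τ, ∑ i : Fin n, c k * u i k := Finset.sum_comm

set_option maxHeartbeats 2000000 in
/-- **ESO for the `τ`-nice sampling.** Let `Ŝ` be the `τ`-nice sampling of `{1,...,n}`
(`τ ≥ 1`) and `f` a partially separable convex function of degree `ω` satisfying the block
Lipschitz condition with constants `Lᵢ`. Then for all `x, h`:
`E[f(x + h_{[Ŝ]})] ≤ f(x) + (τ/n)(⟨∇f(x), h⟩ + (β/2)‖h‖_L²)`, where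
`β = 1 + (ω−1)(τ−1)/max{1, n−1}`. -/
theorem eso_tau_nice
    (n : ℕ) (E : Fin n → Type*) [∀ i, NormedAddCommGroup (E i)]
    [∀ i, NormedSpace ℝ (E i)]
    (L : Fin n → ℝ) (hL : ∀ i, 0 < L i)
    (ι : Type*) [Fintype ι] (J : ι → Finset (Fin n)) (ω : ℕ)
    (hω : ∀ a, (J a).card ≤ ω)
    (fJ : ι → (∀ i, E i) → ℝ)
    (hconv : ∀ a, ConvexOn ℝ Set.univ (fJ a))
    (hdiff : ∀ a, Differentiable ℝ (fJ a))
    (hdep : ∀ a, ∀ x y : ∀ i, E i, (∀ i ∈ J a, x i = y i) → fJ a x = fJ a y)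
    (f : (∀ i, E i) → ℝ) (hf : f = fun x => ∑ a, fJ a x)
    (hlip : ∀ (x : ∀ i, E i) (i : Fin n) (t : E i),
      f (x + Pi.single i t)
        ≤ f x + fderiv ℝ f x (Pi.single i t) + L i / 2 * ‖t‖ ^ 2)
    (τ : ℕ) (hτ1 : 1 ≤ τ) (hτn : τ ≤ n)
    (x h : ∀ i, E i) :
    ∑ S : Finset (Fin n),
        (if S.card = τ then ((n.choose τ : ℝ))⁻¹ else 0)
          * f (x + fun i => if i ∈ S then h i else 0)
      ≤ f x + ((τ : ℝ) / (n : ℝ)) *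
          (fderiv ℝ f x h
            + (1 + ((ω : ℝ) - 1) * ((τ : ℝ) - 1) / ((max 1 (n - 1) : ℕ) : ℝ)) / 2
                * ∑ i, L i * ‖h i‖ ^ 2) := by
  classical
  have hn1 : 1 ≤ n := le_trans hτ1 hτn
  have hfz : ∀ z, f z = ∑ a, fJ a z := fun z => by rw [hf]
  set p : ℝ := ((n.choose τ : ℝ))⁻¹ with hp
  set P : Finset (Finset (Fin n)) := univ.filter (fun S => S.card = τ) with hPdef
  have hNc : 0 < n.choose τ := Nat.choose_pos hτn
  have hNcR : (0:ℝ) < (n.choose τ : ℝ) := by exact_mod_cast hNc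
  have hp0 : 0 ≤ p := by positivity
  have hPcard : P.card = n.choose τ := by
    have hPP : P = Finset.powersetCard τ univ := by
      ext S; simp [hPdef, Finset.mem_powersetCard]
    rw [hPP, Finset.card_powersetCard]
    simp
  set Q : ℝ := ∑ i, L i * ‖h i‖ ^ 2 with hQdef
  have hQ0 : 0 ≤ Q := Finset.sum_nonneg fun i _ => mul_nonneg (hL i).le (by positivity)
  set maxc : ℝ := ((max 1 (n - 1) : ℕ) : ℝ) with hmaxc
  have hmaxc0 : (0:ℝ) < maxc := by
    rw [hmaxc]
    have : 1 ≤ max 1 (n-1) := le_max_left _ _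
    exact_mod_cast lt_of_lt_of_le zero_lt_one (by exact_mod_cast this)
  have hτmax : (τ:ℝ) - 1 ≤ maxc := by
    rw [hmaxc]
    have h1 : τ - 1 ≤ max 1 (n-1) := by omega
    have h2 : ((τ - 1 : ℕ):ℝ) = (τ:ℝ) - 1 := by
      rw [Nat.cast_sub hτ1]; simp
    rw [← h2]
    exact_mod_cast h1
  have hLHS : (∑ S : Finset (Fin n),
      (if S.card = τ then p else 0) * f (x + fun i => if i ∈ S then h i else 0))
      = p * ∑ S ∈ P, f (x + fun i => if i ∈ S then h i else 0) := by
    rw [Finset.mul_sum, hPdef, Finset.sum_filter]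
    apply Finset.sum_congr rfl
    intro S _
    split <;> simp
  rw [hLHS]
  -- trivial case ω = 0
  rcases Nat.eq_zero_or_pos ω with hω0 | hω1
  · have hJe : ∀ a, J a = ∅ := fun a =>
      Finset.card_eq_zero.mp (Nat.le_zero.mp (hω0 ▸ hω a))
    have hconst : ∀ z, f z = f x := by
      intro z
      rw [hfz z, hfz x]
      exact Finset.sum_congr rfl fun a _ =>
        hdep a z x (fun i hi => absurd hi (by simp [hJe a]))
    have hfconst : f = fun _ => f x := funext hconst
    have hderiv0 : fderiv ℝ f x h = 0 := by
      rw [hfconst, fderiv_fun_const]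
      simp
    have hsum : ∑ S ∈ P, f (x + fun i => if i ∈ S then h i else 0)
        = (n.choose τ : ℝ) * f x := by
      rw [Finset.sum_congr rfl (fun S _ => hconst _), Finset.sum_const, hPcard,
        nsmul_eq_mul]
    rw [hsum, hderiv0, ← mul_assoc, hp, inv_mul_cancel₀ (ne_of_gt hNcR), one_mul]
    have hτ10 : (0:ℝ) ≤ (τ:ℝ) - 1 := by
      have : (1:ℝ) ≤ (τ:ℝ) := by exact_mod_cast hτ1
      linarith
    have hdd : ((τ:ℝ) - 1) / maxc ≤ 1 := by
      rw [div_le_one hmaxc0]; exact hτmax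
    have hβ0 : 0 ≤ 1 + ((ω : ℝ) - 1) * ((τ : ℝ) - 1) / maxc := by
      rw [hω0]
      have heq : 1 + (((0:ℕ):ℝ) - 1) * ((τ:ℝ) - 1) / maxc
          = 1 - ((τ:ℝ) - 1) / maxc := by
        push_cast
        ring
      rw [heq]
      linarith
    have hτn0 : 0 ≤ (τ:ℝ)/(n:ℝ) := by positivity
    have hrest : 0 ≤ ((τ:ℝ)/(n:ℝ)) * (0 + (1 + ((ω : ℝ) - 1) * ((τ : ℝ) - 1) / maxc) / 2 * Q) := by
      apply mul_nonneg hτn0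
      rw [zero_add]
      exact mul_nonneg (by linarith) hQ0
    linarith
  -- main case ω ≥ 1
  · set w : ℕ := min ω n with hwdef
    have hw1 : 1 ≤ w := le_min hω1 hn1
    have hwn : w ≤ n := min_le_right _ _
    have hwω : w ≤ ω := min_le_left _ _
    have hpad : ∀ a, ∃ T, J a ⊆ T ∧ T.card = w := by
      intro a
      apply Finset.exists_superset_card_eq
      · exact le_min (hω a) (le_trans (Finset.card_le_univ _) (by simp))
      · simp [hwn]
    choose J' hsub hcard using hpad
    have hdep' : ∀ a, ∀ u v : ∀ i, E i, (∀ i ∈ J' a, u i = v i) → fJ a u = fJ a v :=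
      fun a u v huv => hdep a u v (fun i hi => huv i (hsub a hi))
    set c : ℕ → ℝ := fun k => (((w - 1).choose (k-1) * (n - w).choose (τ-k) : ℕ) : ℝ)
      with hcdef
    have hc0 : ∀ k, 0 ≤ c k := fun k => by rw [hcdef]; positivity
    set D : Fin n → ℝ := fun i => fderiv ℝ f x (Pi.single i (h i)) with hD
    -- step 1 : expectation bound from perA summed over a
    have hsumA : ∑ S ∈ P, (f (x + fun i => if i ∈ S then h i else 0) - f x)
        ≤ ∑ k ∈ Icc 1 τ, ∑ i : Fin n,
            c k * ((k:ℝ)⁻¹ * (f (x + (k:ℝ) • Pi.single i (h i)) - f x)) := by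
      have h1 : ∑ S ∈ P, (f (x + fun i => if i ∈ S then h i else 0) - f x)
          = ∑ a, ∑ S ∈ P, (fJ a (x + fun i => if i ∈ S then h i else 0) - fJ a x) := by
        rw [Finset.sum_comm]
        apply Finset.sum_congr rfl
        intro S _
        rw [hfz, hfz x, ← Finset.sum_sub_distrib]
      have h2 : ∀ a, ∑ S ∈ P, (fJ a (x + fun i => if i ∈ S then h i else 0) - fJ a x)
          ≤ ∑ k ∈ Icc 1 τ, ∑ i : Fin n,
              c k * ((k:ℝ)⁻¹ * (fJ a (x + (k:ℝ) • Pi.single i (h i)) - fJ a x)) := by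
        intro a
        have := perA (fJ a) (hconv a) (J' a) (hdep' a) x h τ hτ1
        rw [hcard a] at this
        exact this
      calc ∑ S ∈ P, (f (x + fun i => if i ∈ S then h i else 0) - f x)
          = ∑ a, ∑ S ∈ P, (fJ a (x + fun i => if i ∈ S then h i else 0) - fJ a x) := h1
        _ ≤ ∑ a, ∑ k ∈ Icc 1 τ, ∑ i : Fin n,
              c k * ((k:ℝ)⁻¹ * (fJ a (x + (k:ℝ) • Pi.single i (h i)) - fJ a x)) :=
            Finset.sum_le_sum fun a _ => h2 a
        _ = ∑ k ∈ Icc 1 τ, ∑ i : Fin n,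
              c k * ((k:ℝ)⁻¹ * (f (x + (k:ℝ) • Pi.single i (h i)) - f x)) := by
            rw [Finset.sum_comm]
            apply Finset.sum_congr rfl
            intro k _
            rw [Finset.sum_comm]
            apply Finset.sum_congr rfl
            intro i _
            rw [← Finset.mul_sum]
            congr 1
            rw [← Finset.mul_sum]
            congr 1
            rw [hfz, hfz x, ← Finset.sum_sub_distrib]
    -- step 2 : Lipschitz bound
    have hlipstep : ∀ k ∈ Icc 1 τ, ∀ i : Fin n,
        c k * ((k:ℝ)⁻¹ * (f (x + (k:ℝ) • Pi.single i (h i)) - f x))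
          ≤ c k * D i + ((k:ℝ) * c k) * (L i / 2 * ‖h i‖ ^ 2) := by
      intro k hk i
      have hk1 : 1 ≤ k := (Finset.mem_Icc.mp hk).1
      have hkR : (0:ℝ) < (k:ℝ) := by exact_mod_cast hk1
      have hl := hlip x i ((k:ℝ) • h i)
      rw [Pi.single_smul] at hl
      have hfd : fderiv ℝ f x ((k:ℝ) • Pi.single i (h i)) = (k:ℝ) * D i := by
        rw [map_smul]; rfl
      have hnorm : ‖(k:ℝ) • h i‖ ^ 2 = (k:ℝ)^2 * ‖h i‖ ^ 2 := by
        rw [norm_smul, Real.norm_natCast, mul_pow]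
      rw [hfd, hnorm] at hl
      have hstep : f (x + (k:ℝ) • Pi.single i (h i)) - f x
          ≤ (k:ℝ) * D i + L i / 2 * ((k:ℝ)^2 * ‖h i‖^2) := by linarith
      calc c k * ((k:ℝ)⁻¹ * (f (x + (k:ℝ) • Pi.single i (h i)) - f x))
          ≤ c k * ((k:ℝ)⁻¹ * ((k:ℝ) * D i + L i / 2 * ((k:ℝ)^2 * ‖h i‖^2))) := by
            apply mul_le_mul_of_nonneg_left _ (hc0 k)
            apply mul_le_mul_of_nonneg_left hstep (by positivity)
        _ = c k * D i + ((k:ℝ) * c k) * (L i / 2 * ‖h i‖ ^ 2) := by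
            field_simp
    set A : ℝ := ∑ k ∈ Icc 1 τ, c k with hA
    set Bq : ℝ := ∑ k ∈ Icc 1 τ, (k:ℝ) * c k with hB
    have hDsum : ∑ i, D i = fderiv ℝ f x h := by
      rw [hD, ← map_sum]
      congr 1
      exact Finset.univ_sum_single h
    have hsum2 : ∑ k ∈ Icc 1 τ, ∑ i : Fin n,
        (c k * D i + ((k:ℝ) * c k) * (L i / 2 * ‖h i‖ ^ 2))
        = A * fderiv ℝ f x h + Bq * (Q / 2) := by
      have hQ2 : ∑ i, (L i / 2 * ‖h i‖ ^ 2) = Q / 2 := by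
        rw [hQdef, Finset.sum_div]
        apply Finset.sum_congr rfl
        intro i _
        ring
      rw [hA, hB, Finset.sum_mul, Finset.sum_mul]
      rw [← Finset.sum_add_distrib]
      apply Finset.sum_congr rfl
      intro k _
      rw [Finset.sum_add_distrib, ← Finset.mul_sum, ← Finset.mul_sum, hDsum, hQ2]
    -- combine
    have hmain : ∑ S ∈ P, f (x + fun i => if i ∈ S then h i else 0)
        ≤ (n.choose τ : ℝ) * f x + A * fderiv ℝ f x h + Bq * (Q / 2) := by
      have h3 : ∑ S ∈ P, (f (x + fun i => if i ∈ S then h i else 0) - f x)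
          ≤ A * fderiv ℝ f x h + Bq * (Q / 2) := by
        calc ∑ S ∈ P, (f (x + fun i => if i ∈ S then h i else 0) - f x)
            ≤ ∑ k ∈ Icc 1 τ, ∑ i : Fin n,
                c k * ((k:ℝ)⁻¹ * (f (x + (k:ℝ) • Pi.single i (h i)) - f x)) := hsumA
          _ ≤ ∑ k ∈ Icc 1 τ, ∑ i : Fin n,
                (c k * D i + ((k:ℝ) * c k) * (L i / 2 * ‖h i‖ ^ 2)) :=
              Finset.sum_le_sum fun k hk =>
                Finset.sum_le_sum fun i _ => hlipstep k hk i
          _ = A * fderiv ℝ f x h + Bq * (Q / 2) := hsum2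
      have h4 : ∑ S ∈ P, (f (x + fun i => if i ∈ S then h i else 0) - f x)
          = (∑ S ∈ P, f (x + fun i => if i ∈ S then h i else 0))
            - (n.choose τ : ℝ) * f x := by
        rw [Finset.sum_sub_distrib, Finset.sum_const, hPcard, nsmul_eq_mul]
      linarith [h3, h4.symm.le]
    -- arithmetic identities
    have hAval : (n:ℝ) * A = (τ:ℝ) * (n.choose τ : ℝ) := by
      have hAnat : A = (((n-1).choose (τ-1) : ℕ) : ℝ) := by
        rw [hA, hcdef, ← Nat.cast_sum, vand1 n τ w hτ1 hw1 hwn]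
      rw [hAnat]
      exact_mod_cast congrArg (Nat.cast (R := ℝ)) (choose_id1 n τ hτ1 hτn)
    have hpA : p * A = (τ:ℝ) / (n:ℝ) := by
      have hnR : (0:ℝ) < (n:ℝ) := by exact_mod_cast hn1
      have hA' : A = (τ:ℝ) * (n.choose τ:ℝ) / (n:ℝ) := by
        rw [eq_div_iff (ne_of_gt hnR)]
        linarith [hAval]
      rw [hA', hp]
      field_simp
    have hBq : p * Bq ≤ ((τ:ℝ)/(n:ℝ)) * (1 + ((ω : ℝ) - 1) * ((τ : ℝ) - 1) / maxc) := by
      rcases eq_or_lt_of_le hτ1 with hτe | hτ2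
      · -- τ = 1
        have hτe' : τ = 1 := hτe.symm
        have hBq1 : Bq = 1 := by
          rw [hB, hτe', Finset.Icc_self, Finset.sum_singleton, hcdef]
          simp [hτe']
        have hNc1 : (n.choose τ : ℝ) = (n : ℝ) := by
          rw [hτe', Nat.choose_one_right]
        have hz : (τ:ℝ) - 1 = 0 := by rw [hτe']; norm_num
        rw [hBq1, hp, hNc1, mul_one, hz, mul_zero, zero_div, add_zero, mul_one, hτe']
        rw [Nat.cast_one, one_div]
      · -- τ ≥ 2
        have hτ2' : 2 ≤ τ := hτ2
        have hn2 : 2 ≤ n := le_trans hτ2' hτn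
        have hnR : (0:ℝ) < (n:ℝ) := by exact_mod_cast hn1
        have hτ10 : (0:ℝ) ≤ (τ:ℝ) - 1 := by
          have : (1:ℝ) ≤ (τ:ℝ) := by exact_mod_cast hτ1
          linarith
        have hn1R : (0:ℝ) < (n:ℝ) - 1 := by
          have : (2:ℝ) ≤ (n:ℝ) := by exact_mod_cast hn2
          linarith
        have hmaxeq : maxc = (n:ℝ) - 1 := by
          rw [hmaxc]
          have hm : max 1 (n-1) = n - 1 := by omega
          rw [hm, Nat.cast_sub hn1, Nat.cast_one]
        have hAnat : A = (((n-1).choose (τ-1) : ℕ) : ℝ) := by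
          rw [hA, hcdef, ← Nat.cast_sum, vand1 n τ w hτ1 hw1 hwn]
        have hBnat : Bq = (((n-1).choose (τ-1) + (w-1) * (n-2).choose (τ-2) : ℕ) : ℝ) := by
          rw [hB, hcdef]
          have hterm : ∀ k ∈ Icc 1 τ,
              (k:ℝ) * (((w-1).choose (k-1) * (n-w).choose (τ-k) : ℕ):ℝ)
              = ((k * ((w-1).choose (k-1) * (n-w).choose (τ-k)) : ℕ) : ℝ) := by
            intro k _
            push_cast
            ring
          rw [Finset.sum_congr rfl hterm, ← Nat.cast_sum, vand2 n τ w hτ2' hw1 hwn]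
        set A2 : ℝ := (((n-1).choose (τ-1) : ℕ) : ℝ) with hA2
        set B2 : ℝ := (((n-2).choose (τ-2) : ℕ) : ℝ) with hB2
        have hBreal : Bq = A2 + ((w:ℝ)-1) * B2 := by
          rw [hBnat, hA2, hB2]
          push_cast [Nat.cast_sub hw1]
          ring
        have hi2 : ((n:ℝ) - 1) * B2 = ((τ:ℝ) - 1) * A2 := by
          have hnn := choose_id1 (n-1) (τ-1) (by omega) (by omega)
          have harg1 : n - 1 - 1 = n - 2 := by omega
          have harg2 : τ - 1 - 1 = τ - 2 := by omega
          rw [harg1, harg2] at hnn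
          have hcast := congrArg (Nat.cast (R := ℝ)) hnn
          push_cast [Nat.cast_sub hn1, Nat.cast_sub hτ1] at hcast
          rw [hA2, hB2]
          push_cast
          linarith [hcast]
        have hpA2 : p * A2 = (τ:ℝ)/(n:ℝ) := by
          rw [← hAnat]
          exact hpA
        have hB2div : B2 = ((τ:ℝ)-1) * A2 / ((n:ℝ)-1) := by
          rw [eq_div_iff (ne_of_gt hn1R)]
          linarith [hi2]
        have hpB2 : p * B2 = (((τ:ℝ)-1)/((n:ℝ)-1)) * ((τ:ℝ)/(n:ℝ)) := by
          calc p * B2 = (((τ:ℝ)-1)/((n:ℝ)-1)) * (p * A2) := by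
                rw [hB2div]; ring
            _ = (((τ:ℝ)-1)/((n:ℝ)-1)) * ((τ:ℝ)/(n:ℝ)) := by rw [hpA2]
        have hωw : ((w:ℝ)) - 1 ≤ ((ω:ℝ)) - 1 := by
          have : (w:ℝ) ≤ (ω:ℝ) := by exact_mod_cast hwω
          linarith
        have hnonneg : 0 ≤ (((τ:ℝ)-1)/((n:ℝ)-1)) * ((τ:ℝ)/(n:ℝ)) := by
          apply mul_nonneg (div_nonneg hτ10 hn1R.le)
          positivity
        rw [hmaxeq]
        calc p * Bq = p * A2 + ((w:ℝ)-1) * (p * B2) := by rw [hBreal]; ring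
          _ = (τ:ℝ)/(n:ℝ) + ((w:ℝ)-1) * ((((τ:ℝ)-1)/((n:ℝ)-1)) * ((τ:ℝ)/(n:ℝ))) := by
              rw [hpA2, hpB2]
          _ ≤ (τ:ℝ)/(n:ℝ) + ((ω:ℝ)-1) * ((((τ:ℝ)-1)/((n:ℝ)-1)) * ((τ:ℝ)/(n:ℝ))) := by
              have := mul_le_mul_of_nonneg_right hωw hnonneg
              linarith
          _ = ((τ:ℝ)/(n:ℝ)) * (1 + ((ω : ℝ) - 1) * ((τ : ℝ) - 1) / ((n:ℝ)-1)) := by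
              ring
    -- final assembly
    have hβQ : Bq * (Q/2) * p ≤ ((τ:ℝ)/(n:ℝ)) *
        ((1 + ((ω : ℝ) - 1) * ((τ : ℝ) - 1) / maxc) / 2 * Q) := by
      have hBq0 : 0 ≤ Bq := Finset.sum_nonneg fun k _ =>
        mul_nonneg (Nat.cast_nonneg k) (hc0 k)
      calc Bq * (Q/2) * p = (p * Bq) * (Q/2) := by ring
        _ ≤ (((τ:ℝ)/(n:ℝ)) * (1 + ((ω : ℝ) - 1) * ((τ : ℝ) - 1) / maxc)) * (Q/2) := by
            apply mul_le_mul_of_nonneg_right hBq (by positivity)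
        _ = ((τ:ℝ)/(n:ℝ)) * ((1 + ((ω : ℝ) - 1) * ((τ : ℝ) - 1) / maxc) / 2 * Q) := by
            ring
    calc p * ∑ S ∈ P, f (x + fun i => if i ∈ S then h i else 0)
        ≤ p * ((n.choose τ : ℝ) * f x + A * fderiv ℝ f x h + Bq * (Q / 2)) :=
          mul_le_mul_of_nonneg_left hmain hp0
      _ = f x + (p * A) * fderiv ℝ f x h + Bq * (Q/2) * p := by
          have hpNc : p * (n.choose τ : ℝ) = 1 := inv_mul_cancel₀ (ne_of_gt hNcR)
          rw [mul_add, mul_add, ← mul_assoc, hpNc, one_mul]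
          ring
      _ ≤ f x + ((τ:ℝ)/(n:ℝ)) * fderiv ℝ f x h
            + ((τ:ℝ)/(n:ℝ)) * ((1 + ((ω : ℝ) - 1) * ((τ : ℝ) - 1) / maxc) / 2 * Q) := by
          rw [hpA]
          linarith [hβQ]
      _ = f x + ((τ:ℝ)/(n:ℝ)) * (fderiv ℝ f x h
            + (1 + ((ω : ℝ) - 1) * ((τ : ℝ) - 1) / maxc) / 2 * Q) := by ring
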